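/- Let β ≠ 0, α ≠ 2β, λ ≠ 1, let f be a probability density function, positive and continuous on (x_i, x_f), with base point x₀ ∈ [x_i, x_f], and let g = 𝔘_{α,β}[f] be its biparametric up transform. Then, whenever the integrals are finite, N_λ[g]^{1−λ} = |(2β−α)/β|^{β(1−λ)/(α−2β)} ∫ |∫_{x₀}^x f(t)^{(β−1)/β} dt|^{β(λ−1)/(2β−α)} f(x) dx; that is, the Rényi entropy power of the biparametric up transform equals, up to the explicit constant, the cumulative moment μ_{β(λ−1)/(2β−α), 1/β}[f] with base point x₀ raised to the power 1/(1−λ). -/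

import Mathlib

open MeasureTheory Set Filter Topology

noncomputable section

/-- The open interval with extended-real endpoints, viewed as a set of reals. -/
def intIoo (a b : EReal) : Set ℝ := {x : ℝ | a < (x : EReal) ∧ (x : EReal) < b}

lemma isOpen_intIoo (a b : EReal) : IsOpen (intIoo a b) := by
  have : intIoo a b = ((↑) : ℝ → EReal) ⁻¹' (Set.Ioo a b) := rfl
  rw [this]
  exact (isOpen_Ioo).preimage continuous_coe_real_ereal

lemma countable_frontier_of_ordConnected {A : Set ℝ} (h : A.OrdConnected) :
    (frontier A).Countable := by
  have hp : IsPreconnected A := isPreconnected_iff_ordConnected.2 h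
  have key : ∀ (X : Set ℝ) (a b : ℝ), frontier X ⊆ {a, b} → (frontier X).Countable :=
    fun X a b hsub => ((Set.finite_singleton b).insert a).countable.mono hsub
  have mem_frontier : ∀ (X : Set ℝ) (x : ℝ), x ∈ frontier X → x ∈ closure X ∧ x ∉ interior X :=
    fun X x hx => ⟨hx.1, hx.2⟩
  rcases hp.mem_intervals with h|h|h|h|h|h|h|h|h|h <;> rw [show A = _ from h] <;> clear h hp
  · refine key _ (sInf A) (sSup A) fun x hx => ?_
    obtain ⟨h1, h2⟩ := mem_frontier _ _ hx
    rw [isClosed_Icc.closure_eq] at h1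
    rw [interior_Icc] at h2
    simp only [mem_insert_iff, mem_singleton_iff]
    by_contra hne; push_neg at hne
    exact h2 ⟨lt_of_le_of_ne h1.1 (Ne.symm hne.1), lt_of_le_of_ne h1.2 hne.2⟩
  · refine key _ (sInf A) (sSup A) fun x hx => ?_
    obtain ⟨h1, h2⟩ := mem_frontier _ _ hx
    have h1' := closure_minimal Ico_subset_Icc_self isClosed_Icc h1
    rw [interior_Ico] at h2
    simp only [mem_insert_iff, mem_singleton_iff]
    by_contra hne; push_neg at hne
    exact h2 ⟨lt_of_le_of_ne h1'.1 (Ne.symm hne.1), lt_of_le_of_ne h1'.2 hne.2⟩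
  · refine key _ (sInf A) (sSup A) fun x hx => ?_
    obtain ⟨h1, h2⟩ := mem_frontier _ _ hx
    have h1' := closure_minimal Ioc_subset_Icc_self isClosed_Icc h1
    rw [interior_Ioc] at h2
    simp only [mem_insert_iff, mem_singleton_iff]
    by_contra hne; push_neg at hne
    exact h2 ⟨lt_of_le_of_ne h1'.1 (Ne.symm hne.1), lt_of_le_of_ne h1'.2 hne.2⟩
  · refine key _ (sInf A) (sSup A) fun x hx => ?_
    obtain ⟨h1, h2⟩ := mem_frontier _ _ hx
    have h1' := closure_minimal Ioo_subset_Icc_self isClosed_Icc h1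
    rw [isOpen_Ioo.interior_eq] at h2
    simp only [mem_insert_iff, mem_singleton_iff]
    by_contra hne; push_neg at hne
    exact h2 ⟨lt_of_le_of_ne h1'.1 (Ne.symm hne.1), lt_of_le_of_ne h1'.2 hne.2⟩
  · refine key _ (sInf A) (sInf A) fun x hx => ?_
    obtain ⟨h1, h2⟩ := mem_frontier _ _ hx
    rw [isClosed_Ici.closure_eq] at h1
    rw [interior_Ici] at h2
    simp only [mem_insert_iff, mem_singleton_iff, or_self]
    exact le_antisymm (not_lt.1 h2) h1
  · refine key _ (sInf A) (sInf A) fun x hx => ?_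
    obtain ⟨h1, h2⟩ := mem_frontier _ _ hx
    have h1' := closure_minimal Ioi_subset_Ici_self isClosed_Ici h1
    rw [isOpen_Ioi.interior_eq] at h2
    simp only [mem_insert_iff, mem_singleton_iff, or_self]
    exact le_antisymm (not_lt.1 h2) h1'
  · refine key _ (sSup A) (sSup A) fun x hx => ?_
    obtain ⟨h1, h2⟩ := mem_frontier _ _ hx
    rw [isClosed_Iic.closure_eq] at h1
    rw [interior_Iic] at h2
    simp only [mem_insert_iff, mem_singleton_iff, or_self]
    exact le_antisymm h1 (not_lt.1 h2)
  · refine key _ (sSup A) (sSup A) fun x hx => ?_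
    obtain ⟨h1, h2⟩ := mem_frontier _ _ hx
    have h1' := closure_minimal Iio_subset_Iic_self isClosed_Iic h1
    rw [isOpen_Iio.interior_eq] at h2
    simp only [mem_insert_iff, mem_singleton_iff, or_self]
    exact le_antisymm h1' (not_lt.1 h2)
  · rw [frontier_univ]; exact countable_empty
  · rw [frontier_empty]; exact countable_empty

/-- the Rényi entropy power of the biparametric up transform
`g = 𝔘_{α,β}[f]` satisfies
`N_λ[g]^{1-λ} = |(2β-α)/β|^{β(1-λ)/(α-2β)} · μ_{β(λ-1)/(2β-α), 1/β}[f]`. -/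
theorem renyi_power_of_biparametric_up_transform
    (α β lam : ℝ) (hβ : β ≠ 0) (hαβ : α ≠ 2 * β) (hlam : lam ≠ 1)
    (xi xf : EReal) (hif : xi < xf)
    (x₀ : ℝ) (hx₀l : xi ≤ (x₀ : EReal)) (hx₀r : (x₀ : EReal) ≤ xf)
    (f Y u g : ℝ → ℝ)
    (hf_meas : Measurable f)
    (hf_nonneg : ∀ x, 0 ≤ f x)
    (hf_supp : ∀ x ∉ intIoo xi xf, f x = 0)
    (hf_int : (∫ x, f x) = 1)
    (hf_pos : ∀ x ∈ intIoo xi xf, 0 < f x)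
    (hf_cont : ContinuousOn f (intIoo xi xf))
    (hY : ∀ x, Y x = ∫ t in x₀..x, f t ^ ((β - 1) / β))
    (hu_fin : ∀ x ∈ intIoo xi xf,
      IntegrableOn (fun r => |((α - 2 * β) / β) * Y r| ^ (β / (α - 2 * β)) * f r)
        (intIoo (x : EReal) xf))
    (hu : ∀ x ∈ intIoo xi xf,
      u x = ∫ r in intIoo (x : EReal) xf,
        |((α - 2 * β) / β) * Y r| ^ (β / (α - 2 * β)) * f r)
    (hu_anti : StrictAntiOn u (intIoo xi xf))
    (hg : ∀ x ∈ intIoo xi xf,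
      g (u x) = |((α - 2 * β) / β) * Y x| ^ (β / (2 * β - α)))
    (hg_supp : ∀ v ∉ u '' intIoo xi xf, g v = 0)
    (hfin1 : IntegrableOn (fun v => g v ^ lam) (u '' intIoo xi xf))
    (hfin2 : IntegrableOn
      (fun x => |∫ t in x₀..x, f t ^ ((β - 1) / β)| ^ (β * (lam - 1) / (2 * β - α)) * f x)
      (intIoo xi xf)) :
    ((∫ v in u '' intIoo xi xf, g v ^ lam) ^ ((1 : ℝ) / (1 - lam))) ^ (1 - lam)
      = |(2 * β - α) / β| ^ (β * (1 - lam) / (α - 2 * β))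
        * ∫ x in intIoo xi xf,
            |∫ t in x₀..x, f t ^ ((β - 1) / β)| ^ (β * (lam - 1) / (2 * β - α)) * f x := by
  have hαβ' : α - 2 * β ≠ 0 := sub_ne_zero.mpr hαβ
  have h2βα : (2 : ℝ) * β - α ≠ 0 := fun h => hαβ' (by linarith)
  have hne : (1 : ℝ) - lam ≠ 0 := sub_ne_zero.mpr (Ne.symm hlam)
  set s : Set ℝ := intIoo xi xf with hs_def
  have hs_open : IsOpen s := isOpen_intIoo xi xf
  set c : ℝ := (α - 2 * β) / β with hc_def
  have hc : c ≠ 0 := div_ne_zero hαβ' hβ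
  set e : ℝ := β / (α - 2 * β) with he_def
  have he : e ≠ 0 := div_ne_zero hβ hαβ'
  set q : ℝ := β * (lam - 1) / (2 * β - α) with hq_def
  have hq : q ≠ 0 := div_ne_zero (mul_ne_zero hβ (sub_ne_zero.mpr hlam)) h2βα
  set G : ℝ → ℝ := fun t => f t ^ ((β - 1) / β) with hG_def
  set H : ℝ → ℝ := fun r => |c * Y r| ^ e * f r with hH_def

  -- check abstraction
  have check1 : ∀ x ∈ s, IntegrableOn H (intIoo (x : EReal) xf) := hu_fin
  have check2 : ∀ x ∈ s, u x = ∫ r in intIoo (x : EReal) xf, H r := hu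
  have check3 : ∀ x, Y x = ∫ t in x₀..x, G t := hY
  -- basic facts about G
  have hG_cont : ContinuousOn G s := fun x hx =>
    (hf_cont x hx).rpow_const (Or.inl (ne_of_gt (hf_pos x hx)))
  have hG_contAt : ∀ x ∈ s, ContinuousAt G x := fun x hx =>
    hG_cont.continuousAt (hs_open.mem_nhds hx)
  have hG_pos : ∀ x ∈ s, 0 < G x := fun x hx => Real.rpow_pos_of_pos (hf_pos x hx) _
  -- the set A where Y is given by a genuine integral
  set A : Set ℝ := {x | x ∈ s ∧ IntervalIntegrable G volume x₀ x} with hA_def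
  have hA_sub : A ⊆ s := fun x hx => hx.1
  have hA_ord : A.OrdConnected := by
    refine ⟨fun x hx y hy z hz => ⟨⟨?_, ?_⟩, ?_⟩⟩
    · exact lt_of_lt_of_le hx.1.1 (EReal.coe_le_coe_iff.2 hz.1)
    · exact lt_of_le_of_lt (EReal.coe_le_coe_iff.2 hz.2) hy.1.2
    · rcases le_total z x₀ with h | h
      · exact hx.2.mono_set (uIcc_subset_uIcc left_mem_uIcc (Icc_subset_uIcc' ⟨hz.1, h⟩))
      · exact hy.2.mono_set (uIcc_subset_uIcc left_mem_uIcc (Icc_subset_uIcc ⟨h, hz.2⟩))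

  -- Y is differentiable (hence continuous) at points of s where the integral converges
  have hY_fun : (fun y => ∫ t in x₀..y, G t) = Y := funext fun y => (hY y).symm
  have hY_contAt : ∀ x ∈ s, IntervalIntegrable G volume x₀ x → ContinuousAt Y x := by
    intro x hx hint
    have := (intervalIntegral.integral_hasDerivAt_right hint
      (hG_cont.stronglyMeasurableAtFilter hs_open x hx) (hG_contAt x hx)).continuousAt
    rwa [hY_fun] at this
  have hY_zero : ∀ y ∈ s, y ∉ A → Y y = 0 := by
    intro y hy hyA
    rw [hY y]
    exact intervalIntegral.integral_undef (fun hint => hyA ⟨hy, hint⟩)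
  have hY_ne : ∀ x ∈ A, x ≠ x₀ → Y x ≠ 0 := by
    intro x hx hxne
    rcases lt_or_gt_of_ne hxne with hlt | hgt
    · -- x < x₀ : Y x < 0
      have hpos : 0 < ∫ t in x..x₀, G t := by
        refine intervalIntegral.intervalIntegral_pos_of_pos_on hx.2.symm (fun t ht => hG_pos t ?_) hlt
        exact ⟨lt_trans hx.1.1 (EReal.coe_lt_coe_iff.2 ht.1),
          lt_of_lt_of_le (EReal.coe_lt_coe_iff.2 ht.2) hx₀r⟩
      have : Y x = -∫ t in x..x₀, G t := by rw [hY x, intervalIntegral.integral_symm]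
      rw [this]; exact neg_ne_zero.2 (ne_of_gt hpos)
    · -- x₀ < x : Y x > 0
      have hpos : 0 < ∫ t in x₀..x, G t := by
        refine intervalIntegral.intervalIntegral_pos_of_pos_on hx.2 (fun t ht => hG_pos t ?_) hgt
        exact ⟨lt_of_le_of_lt hx₀l (EReal.coe_lt_coe_iff.2 ht.1),
          lt_trans (EReal.coe_lt_coe_iff.2 ht.2) hx.1.2⟩
      rw [hY x]; exact ne_of_gt hpos
  -- the good open set
  set O : Set ℝ := (interior A \ {x₀}) ∪ interior (s \ A) with hO_def
  have hO_open : IsOpen O := ((isOpen_interior.sdiff isClosed_singleton).union isOpen_interior)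
  set s2 : Set ℝ := s ∩ O with hs2_def
  have hs2_open : IsOpen s2 := hs_open.inter hO_open
  have hs2_sub : s2 ⊆ s := inter_subset_left
  -- H vanishes where Y vanishes
  have hH0 : ∀ y, Y y = 0 → H y = 0 := by
    intro y hy
    simp [hH_def, hy, Real.zero_rpow he]
  have hH_nonneg : ∀ r, 0 ≤ H r := fun r =>
    mul_nonneg (Real.rpow_nonneg (abs_nonneg _) _) (hf_nonneg r)
  -- H is continuous at every point of O
  have hH_contAt : ∀ x ∈ O, ContinuousAt H x := by
    intro x hx
    rcases hx with hx | hx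
    · have hxA : x ∈ A := interior_subset hx.1
      have hYne : Y x ≠ 0 := hY_ne x hxA (by simpa using hx.2)
      have hYc : ContinuousAt Y x := hY_contAt x hxA.1 hxA.2
      have hbase : ContinuousAt (fun r => |c * Y r|) x :=
        (continuous_abs.continuousAt).comp (continuousAt_const.mul hYc)
      have h1 : ContinuousAt (fun r => |c * Y r| ^ e) x :=
        hbase.rpow_const (Or.inl (abs_ne_zero.2 (mul_ne_zero hc hYne)))
      exact h1.mul (hf_cont.continuousAt (hs_open.mem_nhds hxA.1))
    · have hmem : (s \ A) ∈ 𝓝 x := mem_interior_iff_mem_nhds.1 hx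
      have heq : H =ᶠ[𝓝 x] (fun _ => (0 : ℝ)) :=
        eventually_of_mem hmem (fun y hy => hH0 y (hY_zero y hy.1 hy.2))
      exact (continuousAt_congr heq).2 continuousAt_const

  -- representation of u as a primitive
  have hu_key : ∀ x ∈ s, ∀ y ∈ s, x ≤ y → u x = (∫ t in x..y, H t) + u y := by
    intro x hx y hy hxy
    have hdecomp : intIoo (x : EReal) xf = Ioc x y ∪ intIoo (y : EReal) xf := by
      ext r
      constructor
      · rintro ⟨h1, h2⟩
        rcases le_or_gt r y with h | h
        · exact Or.inl ⟨EReal.coe_lt_coe_iff.1 h1, h⟩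
        · exact Or.inr ⟨EReal.coe_lt_coe_iff.2 h, h2⟩
      · rintro (⟨h1, h2⟩ | ⟨h1, h2⟩)
        · exact ⟨EReal.coe_lt_coe_iff.2 h1, lt_of_le_of_lt (EReal.coe_le_coe_iff.2 h2) hy.2⟩
        · exact ⟨lt_of_le_of_lt (EReal.coe_le_coe_iff.2 hxy) h1, h2⟩
    have hdisj : Disjoint (Ioc x y) (intIoo (y : EReal) xf) := by
      rw [Set.disjoint_left]
      rintro r ⟨_, h2⟩ ⟨h3, _⟩
      exact absurd (EReal.coe_lt_coe_iff.1 h3) (not_lt.2 h2)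
    have hsub1 : Ioc x y ⊆ intIoo (x : EReal) xf := fun r hr =>
      ⟨EReal.coe_lt_coe_iff.2 hr.1, lt_of_le_of_lt (EReal.coe_le_coe_iff.2 hr.2) hy.2⟩
    have hsub2 : intIoo (y : EReal) xf ⊆ intIoo (x : EReal) xf := fun r hr =>
      ⟨lt_of_le_of_lt (EReal.coe_le_coe_iff.2 hxy) hr.1, hr.2⟩
    rw [hu x hx, hu y hy, hdecomp,
      setIntegral_union hdisj (isOpen_intIoo _ _).measurableSet
        ((hu_fin x hx).mono_set hsub1) ((hu_fin x hx).mono_set hsub2),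
      intervalIntegral.integral_of_le hxy]
  have hu_rep : ∀ x ∈ s, ∀ y ∈ s, u y = u x - ∫ t in x..y, H t := by
    intro x hx y hy
    rcases le_total x y with h | h
    · have := hu_key x hx y hy h; linarith
    · have := hu_key y hy x hx h
      rw [intervalIntegral.integral_symm]
      linarith
  -- u is differentiable on s2 with derivative -H
  have hu_deriv : ∀ x ∈ s2, HasDerivAt u (-(H x)) x := by
    intro x hx
    have hFTC : HasDerivAt (fun t => ∫ r in x..t, H r) (H x) x :=
      intervalIntegral.integral_hasDerivAt_right (IntervalIntegrable.refl)
        (ContinuousAt.stronglyMeasurableAtFilter hO_open hH_contAt x hx.2)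
        (hH_contAt x hx.2)
    have hF2 : HasDerivAt (fun y => u x - ∫ r in x..y, H r) (-(H x)) x := hFTC.const_sub (u x)
    have heq : u =ᶠ[𝓝 x] (fun y => u x - ∫ r in x..y, H r) :=
      eventually_of_mem (hs_open.mem_nhds hx.1) (fun y hy => hu_rep x hx.1 y hy)
    exact hF2.congr_of_eventuallyEq heq

  -- change of variables on s2
  have hinj : InjOn u s2 := (hu_anti.injOn).mono hs2_sub
  have cov := integral_image_eq_integral_abs_deriv_smul hs2_open.measurableSet
    (fun x hx => (hu_deriv x hx).hasDerivWithinAt) hinj (fun v => g v ^ lam)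
  -- pointwise computation of the integrand
  have hg' : ∀ x ∈ s, g (u x) = |c * Y x| ^ (-e) := by
    intro x hx
    rw [hg x hx]
    congr 1
    rw [he_def, show (2 * β - α : ℝ) = -(α - 2 * β) by ring, div_neg]
  have hqe : e * (1 - lam) = q := by
    rw [he_def, hq_def]
    field_simp
    rw [show (β * 2 - α) = -(α - β * 2) by ring, div_neg]
    ring
  have hpt : ∀ x ∈ s2, |(-(H x))| • (g (u x)) ^ lam = |c| ^ q * (|Y x| ^ q * f x) := by
    intro x hx
    rw [abs_neg, abs_of_nonneg (hH_nonneg x), smul_eq_mul, hg' x (hs2_sub hx)]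
    by_cases hY0 : Y x = 0
    · rw [hH0 x hY0, hY0, zero_mul]
      simp [Real.zero_rpow hq]
    · have hb : 0 < |c * Y x| := abs_pos.2 (mul_ne_zero hc hY0)
      rw [hH_def]
      simp only []
      rw [← Real.rpow_mul hb.le, mul_comm (|c * Y x| ^ e) (f x), mul_assoc,
        ← Real.rpow_add hb, show e + -e * lam = e * (1 - lam) by ring, hqe,
        abs_mul, Real.mul_rpow (abs_nonneg c) (abs_nonneg (Y x))]
      ring

  -- the bad set is countable
  have hD_sub : s \ s2 ⊆ frontier A ∪ {x₀} := by
    intro x hx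
    by_cases hx0 : x = x₀
    · exact Or.inr hx0
    have hxO : x ∉ O := fun h => hx.2 ⟨hx.1, h⟩
    have h1 : x ∉ interior A := fun h => hxO (Or.inl ⟨h, hx0⟩)
    have h2 : x ∉ interior (s \ A) := fun h => hxO (Or.inr h)
    left
    refine ⟨?_, h1⟩
    by_contra hcl
    exact h2 (mem_interior.2 ⟨s ∩ (closure A)ᶜ,
      fun y hy => ⟨hy.1, fun hyA => hy.2 (subset_closure hyA)⟩,
      hs_open.inter (isClosed_closure.isOpen_compl), ⟨hx.1, hcl⟩⟩)
  have hD_ctbl : (s \ s2).Countable :=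
    (((countable_frontier_of_ordConnected hA_ord).union (countable_singleton x₀)).mono hD_sub)
  have hD_null : volume (s \ s2) = 0 := hD_ctbl.measure_zero _
  have hs_ae : s =ᵐ[volume] s2 := by
    rw [MeasureTheory.ae_eq_set]
    refine ⟨hD_null, ?_⟩
    rw [diff_eq_empty.2 hs2_sub]
    exact measure_empty
  have himg_ae : u '' s =ᵐ[volume] u '' s2 := by
    rw [MeasureTheory.ae_eq_set]
    constructor
    · refine measure_mono_null (fun v hv => ?_) ((hD_ctbl.image u).measure_zero volume)
      obtain ⟨⟨x, hxs, rfl⟩, hv2⟩ := hv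
      exact ⟨x, ⟨hxs, fun hx2 => hv2 ⟨x, hx2, rfl⟩⟩, rfl⟩
    · rw [diff_eq_empty.2 (show u '' s2 ⊆ u '' s from image_mono hs2_sub)]
      exact measure_empty
  -- nonnegativity of the image integral
  have hg_nonneg : ∀ v, 0 ≤ g v := by
    intro v
    by_cases hv : v ∈ u '' s
    · obtain ⟨x, hxs, rfl⟩ := hv
      rw [hg x hxs]
      exact Real.rpow_nonneg (abs_nonneg _) _
    · rw [hg_supp v hv]
  have hI0 : 0 ≤ ∫ v in u '' s, g v ^ lam :=
    integral_nonneg (fun v => Real.rpow_nonneg (hg_nonneg v) lam)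
  -- assemble
  have habs : |c| = |(2 * β - α) / β| := by
    rw [hc_def, abs_div, abs_div, abs_sub_comm]
  have hexp : β * (1 - lam) / (α - 2 * β) = q := by
    rw [hq_def]
    field_simp
    rw [show (β * 2 - α) = -(α - β * 2) by ring, div_neg]
    ring
  have lhs_eq : ((∫ v in u '' s, g v ^ lam) ^ ((1 : ℝ) / (1 - lam))) ^ (1 - lam)
      = ∫ v in u '' s, g v ^ lam := by
    rw [← Real.rpow_mul hI0, one_div_mul_cancel hne, Real.rpow_one]
  rw [lhs_eq, hexp, ← habs]
  calc ∫ v in u '' s, g v ^ lam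
      = ∫ v in u '' s2, g v ^ lam := setIntegral_congr_set himg_ae
    _ = ∫ x in s2, |(-(H x))| • (g (u x)) ^ lam := cov
    _ = ∫ x in s2, |c| ^ q * (|Y x| ^ q * f x) :=
        setIntegral_congr_fun hs2_open.measurableSet hpt
    _ = |c| ^ q * ∫ x in s2, |Y x| ^ q * f x := integral_const_mul _ _
    _ = |c| ^ q * ∫ x in s, |Y x| ^ q * f x := by rw [setIntegral_congr_set hs_ae.symm]
    _ = |c| ^ q * ∫ x in s, |∫ t in x₀..x, G t| ^ q * f x := by simp_rw [hY]
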